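/- Let d ≥ 3, σ > 0, and for x ∈ ℝ^d, x ≠ 0, define g(x) = −a σ² r(‖x‖²)/‖x‖² · x, where r: ℝ₊ → ℝ₊ is differentiable, increasing, with 0 ≤ r ≤ 1, and 0 < a ≤ 2(d−2). Then for all x ≠ 0, ‖g(x)‖² + 2σ² ∑_{i=1}^d ∂_i g^i(x) = a σ⁴ [a r²(‖x‖²)/‖x‖² − 2(d−2) r(‖x‖²)/‖x‖² − 4 r'(‖x‖²)] ≤ 0. -/

import Mathlib

lemma mono_deriv_nonneg (r : ℝ → ℝ) (hr_diff : Differentiable ℝ r) (hr_mono : Monotone r)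
    (s : ℝ) : 0 ≤ deriv r s := by
  have h := (hasDerivAt_iff_tendsto_slope.mp (hr_diff s).hasDerivAt).mono_left
    (nhdsWithin_mono s (show Set.Ioi s ⊆ {s}ᶜ from fun y hy => ne_of_gt hy))
  refine ge_of_tendsto h ?_
  filter_upwards [self_mem_nhdsWithin] with y hy
  have h1 : s < y := hy
  have h2 := hr_mono h1.le
  rw [slope_def_field]
  exact div_nonneg (by linarith) (by linarith)

/-- For `d ≥ 3`, `σ² > 0`, `g(x) = -aσ² (r(‖x‖²)/‖x‖²) x` with `r : ℝ₊ → ℝ₊` differentiable,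
increasing, `0 ≤ r ≤ 1` and `0 < a ≤ 2(d-2)`, one has for every `x ≠ 0`:
`‖g(x)‖² + 2σ² ∑ᵢ ∂ᵢgⁱ(x)
  = aσ⁴ [a r(‖x‖²)²/‖x‖² - 2(d-2) r(‖x‖²)/‖x‖² - 4 r'(‖x‖²)] ≤ 0`. -/
theorem shrinkage_pointwise_bound (d : ℕ) (hd : 3 ≤ d) (σ2 a : ℝ) (hσ2 : 0 < σ2)
    (r : ℝ → ℝ) (hr_diff : Differentiable ℝ r) (hr_mono : Monotone r)
    (hr0 : ∀ s, 0 ≤ r s) (hr1 : ∀ s, r s ≤ 1)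
    (ha0 : 0 < a) (ha : a ≤ 2 * (d - 2))
    (g : EuclideanSpace ℝ (Fin d) → EuclideanSpace ℝ (Fin d))
    (hg : g = fun x => (-(a * σ2) * r (‖x‖ ^ 2) / ‖x‖ ^ 2) • x)
    (x : EuclideanSpace ℝ (Fin d)) (hx : x ≠ 0) :
    ‖g x‖ ^ 2 + 2 * σ2 * ∑ i : Fin d,
        fderiv ℝ (fun y => g y i) x (EuclideanSpace.single i 1)
      = a * σ2 ^ 2 * (a * r (‖x‖ ^ 2) ^ 2 / ‖x‖ ^ 2
          - 2 * (d - 2) * r (‖x‖ ^ 2) / ‖x‖ ^ 2 - 4 * deriv r (‖x‖ ^ 2)) ∧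
    a * σ2 ^ 2 * (a * r (‖x‖ ^ 2) ^ 2 / ‖x‖ ^ 2
        - 2 * (d - 2) * r (‖x‖ ^ 2) / ‖x‖ ^ 2 - 4 * deriv r (‖x‖ ^ 2)) ≤ 0 := by
  set s : ℝ := ‖x‖ ^ 2 with hs_def
  have hxnorm : 0 < ‖x‖ := norm_pos_iff.mpr hx
  have hs : 0 < s := by positivity
  set c : ℝ := -(a * σ2) with hc_def
  -- derivative of the squared norm
  have hN : HasFDerivAt (fun y : EuclideanSpace ℝ (Fin d) => ‖y‖ ^ 2)
      ((2 : ℕ) • (innerSL ℝ x)) x := (hasStrictFDerivAt_norm_sq x).hasFDerivAt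
  have hrN : HasFDerivAt (fun y : EuclideanSpace ℝ (Fin d) => r (‖y‖ ^ 2))
      (deriv r s • ((2 : ℕ) • (innerSL ℝ x))) x :=
    ((hr_diff s).hasDerivAt).comp_hasFDerivAt x hN
  have hinv : HasFDerivAt (fun y : EuclideanSpace ℝ (Fin d) => (‖y‖ ^ 2)⁻¹)
      ((-(s ^ 2)⁻¹) • ((2 : ℕ) • (innerSL ℝ x))) x :=
    (hasDerivAt_inv hs.ne').comp_hasFDerivAt x hN
  have h1 : HasFDerivAt (fun y : EuclideanSpace ℝ (Fin d) => c * r (‖y‖ ^ 2))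
      (c • (deriv r s • ((2 : ℕ) • (innerSL ℝ x)))) x := hrN.const_mul c
  have h2 := h1.mul hinv
  have key : ∀ i : Fin d, fderiv ℝ (fun y => g y i) x (EuclideanSpace.single i 1)
      = c * r s / s
        + x i * ((c * r s) * (-(s ^ 2)⁻¹ * (2 * x i)) + s⁻¹ * (c * (deriv r s * (2 * x i)))) := by
    intro i
    have hP : HasFDerivAt (𝕜 := ℝ) (fun y : EuclideanSpace ℝ (Fin d) => y i)
        (EuclideanSpace.proj i) x := by
      simpa using (EuclideanSpace.proj (𝕜 := ℝ) (ι := Fin d) i).hasFDerivAt (x := x)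
    have h3 : HasFDerivAt (fun y : EuclideanSpace ℝ (Fin d) =>
        (c * r (‖y‖ ^ 2)) * (‖y‖ ^ 2)⁻¹ * (y i)) _ x := h2.mul hP
    have hfun : (fun y => g y i)
        = fun y : EuclideanSpace ℝ (Fin d) => (c * r (‖y‖ ^ 2)) * (‖y‖ ^ 2)⁻¹ * (y i) := by
      subst hg
      funext y
      simp [div_eq_mul_inv, mul_comm]
    rw [hfun, h3.fderiv]
    have hinner : (innerSL ℝ x) (EuclideanSpace.single i 1) = x i := by
      simp [EuclideanSpace.inner_single_right]
    have hproj : (EuclideanSpace.proj (𝕜 := ℝ) (ι := Fin d) i) (EuclideanSpace.single i (1:ℝ)) = 1 := by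
      simp
    simp only [ContinuousLinearMap.add_apply, ContinuousLinearMap.smul_apply, hinner, hproj,
      smul_eq_mul, Pi.mul_apply]
    ring_nf
    rw [hs_def]
    ring
  have hsum : ∑ i, x i ^ 2 = s := by
    rw [hs_def, EuclideanSpace.norm_eq, Real.sq_sqrt (by positivity)]
    simp [Real.norm_eq_abs, sq_abs]
  have hS : ∑ i : Fin d, fderiv ℝ (fun y => g y i) x (EuclideanSpace.single i 1)
      = d * (c * r s / s) + ((c * r s) * (-(s ^ 2)⁻¹ * 2) + s⁻¹ * (c * (deriv r s * 2))) * s := by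
    rw [Finset.sum_congr rfl (fun i _ => key i), Finset.sum_add_distrib, Finset.sum_const,
      Finset.card_univ, Fintype.card_fin, ← hsum, Finset.mul_sum]
    congr 1
    · simp [nsmul_eq_mul]
    · refine Finset.sum_congr rfl fun i _ => ?_
      ring
  have hgx : ‖g x‖ ^ 2 = (c * r s / s) ^ 2 * s := by
    have : g x = (c * r s / s) • x := by rw [hg]
    rw [this, norm_smul, mul_pow, Real.norm_eq_abs, sq_abs, hs_def]
  have hr' := mono_deriv_nonneg r hr_diff hr_mono s
  have hrs0 := hr0 s
  have hrs1 := hr1 s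
  have hd3 : (3 : ℝ) ≤ (d : ℝ) := by exact_mod_cast hd
  constructor
  · rw [hgx, hS, hc_def]
    field_simp
    ring
  · have key2 : a * r s ^ 2 ≤ 2 * ((d : ℝ) - 2) * r s := by
      nlinarith [mul_le_mul_of_nonneg_right ha hrs0, mul_le_mul_of_nonneg_left hrs1 (mul_nonneg ha0.le hrs0)]
    have h1 : a * r s ^ 2 / s ≤ 2 * ((d : ℝ) - 2) * r s / s := by
      gcongr
    have h2 : a * r s ^ 2 / s - 2 * ((d : ℝ) - 2) * r s / s - 4 * deriv r s ≤ 0 := by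
      linarith
    nlinarith [sq_nonneg σ2, mul_pos ha0 (mul_pos hσ2 hσ2)]
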